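/- Let q and N be nonnegative integers and n a positive integer. Then for all x ∈ [0,1], 2(n+1)(n+N+q+1)(2n+N+q) · R_{N,n+1}(x) = −( (2n+N+q+1)(N+q)² + (2n+N+q)(2n+N+q+1)(2n+N+q+2)(1−2x²) ) · R_{N,n}(x) − 2n(n+N+q)(2n+N+q+2) · R_{N,n−1}(x). -/

import Mathlib

open Finset

/-- The radial Zernike polynomial `R_{N,n}` in dimension `p + 2` with `p = 2q`. -/
noncomputable def zernikeR (q N n : ℕ) (x : ℝ) : ℝ :=
  x ^ N * ∑ k ∈ Finset.range (n + 1),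
    (-1 : ℝ) ^ k * (Nat.choose (n + N + q) k : ℝ) * (Nat.choose n k : ℝ) *
      x ^ (2 * (n - k)) * (1 - x ^ 2) ^ k



lemma inner_vdm (a n m : ℕ) (hm : m ≤ n) :
    ∑ j ∈ Finset.range (m + 1),
      (n + a).choose j * (n.choose j * (n - j).choose (m - j))
      = n.choose m * (a + n + m).choose m := by
  have h1 : ∀ j ∈ Finset.range (m + 1),
      (n + a).choose j * (n.choose j * (n - j).choose (m - j))
        = n.choose m * ((n + a).choose j * m.choose j) := by
    intro j hj
    rw [Finset.mem_range] at hj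
    have h2 : n.choose m * m.choose j = n.choose j * (n - j).choose (m - j) :=
      Nat.choose_mul (by omega)
    rw [← h2]; ring
  rw [Finset.sum_congr rfl h1, ← Finset.mul_sum]
  congr 1
  have hv := Nat.add_choose_eq (n + a) m m
  rw [Finset.Nat.sum_antidiagonal_eq_sum_range_succ_mk] at hv
  rw [show a + n + m = n + a + m by ring, hv]
  refine Finset.sum_congr rfl fun j hj => ?_
  rw [Finset.mem_range] at hj
  show (n + a).choose j * m.choose j = (n + a).choose j * m.choose (m - j)
  rw [Nat.choose_symm (by omega)]

lemma rep' (a n : ℕ) (t : ℝ) :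
    ∑ k ∈ Finset.range (n + 1),
      (-1:ℝ)^k * ((n+a).choose k : ℝ) * (n.choose k : ℝ) * t^(n-k) * (1-t)^k
      = ∑ m ∈ Finset.range (n + 1),
          (n.choose m : ℝ) * ((a+n+m).choose m : ℝ) * (t-1)^m := by
  have step1 : ∀ k ∈ Finset.range (n+1),
      (-1:ℝ)^k * ((n+a).choose k : ℝ) * (n.choose k : ℝ) * t^(n-k) * (1-t)^k
      = ∑ i ∈ Finset.range (n - k + 1),
          ((n+a).choose k : ℝ) * (n.choose k : ℝ) * ((n-k).choose i : ℝ) * (t-1)^(k+i) := by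
    intro k _
    have hp : t^(n-k) = ∑ i ∈ Finset.range (n-k+1), (t-1)^i * ((n-k).choose i : ℝ) := by
      conv_lhs => rw [show t = (t-1) + 1 by ring, add_pow]
      simp
    rw [hp, Finset.mul_sum, Finset.sum_mul]
    refine Finset.sum_congr rfl fun i _ => ?_
    have h : (-1:ℝ)^k * (1-t)^k = (t-1)^k := by
      rw [← mul_pow]; ring_nf
    rw [pow_add]
    linear_combination (((n+a).choose k : ℝ) * (n.choose k : ℝ) * ((n-k).choose i : ℝ)
      * (t-1)^i) * h
  have step2 : ∀ m ∈ Finset.range (n+1),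
      (n.choose m : ℝ) * ((a+n+m).choose m : ℝ) * (t-1)^m
      = ∑ j ∈ Finset.range (m+1),
          ((n+a).choose j : ℝ) * (n.choose j : ℝ) * ((n-j).choose (m-j) : ℝ) * (t-1)^m := by
    intro m hm
    rw [Finset.mem_range] at hm
    have h := inner_vdm a n m (by omega)
    have hc : (n.choose m : ℝ) * ((a+n+m).choose m : ℝ)
        = ∑ j ∈ Finset.range (m+1),
            ((n+a).choose j : ℝ) * (((n.choose j : ℝ)) * (((n-j).choose (m-j) : ℝ))) := by
      exact_mod_cast congrArg (Nat.cast (R := ℝ)) h.symm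
    rw [hc, Finset.sum_mul]
    exact Finset.sum_congr rfl fun j _ => by ring
  rw [Finset.sum_congr rfl step1, Finset.sum_congr rfl step2,
    Finset.sum_sigma', Finset.sum_sigma']
  refine Finset.sum_nbij' (fun x => ⟨x.1 + x.2, x.1⟩) (fun x => ⟨x.2, x.1 - x.2⟩)
    ?_ ?_ ?_ ?_ ?_
  · rintro ⟨k, i⟩ hx
    simp only [Finset.mem_sigma, Finset.mem_range] at hx ⊢
    omega
  · rintro ⟨m, j⟩ hx
    simp only [Finset.mem_sigma, Finset.mem_range] at hx ⊢
    omega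
  · rintro ⟨k, i⟩ hx
    simp only [Finset.mem_sigma, Finset.mem_range] at hx
    dsimp only
    simp only [Sigma.mk.inj_iff, heq_eq_eq]
    refine ⟨by first | trivial | omega, by first | trivial | omega⟩
  · rintro ⟨m, j⟩ hx
    simp only [Finset.mem_sigma, Finset.mem_range] at hx
    dsimp only
    simp only [Sigma.mk.inj_iff, heq_eq_eq]
    refine ⟨by first | trivial | omega, by first | trivial | omega⟩
  · rintro ⟨k, i⟩ hx
    simp only [Finset.mem_sigma, Finset.mem_range] at hx
    dsimp only
    simp only [Nat.add_sub_cancel_left]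

lemma perterm (a p m : ℕ) (u : ℝ) :
    (2*((p:ℝ)+2)*((p:ℝ)+(a:ℝ)+2)*(2*(p:ℝ)+(a:ℝ)+2))
        * (((p+2).choose (m+1) : ℝ) * ((a+p+m+3).choose (m+1) : ℝ) * u^(m+1))
      - ((2*(p:ℝ)+(a:ℝ)+3)*((2*(p:ℝ)+(a:ℝ)+2)*(2*(p:ℝ)+(a:ℝ)+4) - (a:ℝ)^2))
        * (((p+1).choose (m+1) : ℝ) * ((a+p+m+2).choose (m+1) : ℝ) * u^(m+1))
      + (2*((p:ℝ)+1)*((p:ℝ)+(a:ℝ)+1)*(2*(p:ℝ)+(a:ℝ)+4))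
        * ((p.choose (m+1) : ℝ) * ((a+p+m+1).choose (m+1) : ℝ) * u^(m+1))
    = (2*(2*(p:ℝ)+(a:ℝ)+2)*(2*(p:ℝ)+(a:ℝ)+3)*(2*(p:ℝ)+(a:ℝ)+4))
        * (((p+1).choose m : ℝ) * ((a+p+m+1).choose m : ℝ) * u^(m+1)) := by
  rcases Nat.lt_or_ge (p+1) m with hm | hm
  · -- m ≥ p+2 : all binomials vanish
    have h1 : (p+2).choose (m+1) = 0 := Nat.choose_eq_zero_of_lt (by omega)
    have h2 : (p+1).choose (m+1) = 0 := Nat.choose_eq_zero_of_lt (by omega)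
    have h3 : p.choose (m+1) = 0 := Nat.choose_eq_zero_of_lt (by omega)
    have h4 : (p+1).choose m = 0 := Nat.choose_eq_zero_of_lt (by omega)
    rw [h1, h2, h3, h4]
    push_cast
    ring
  · -- m ≤ p+1
    have hm1 : ((m:ℝ)+1) ≠ 0 := by positivity
    have hp1 : ((p:ℝ)+1) ≠ 0 := by positivity
    have hap : ((a:ℝ)+(p:ℝ)+2) ≠ 0 := by positivity
    -- E2
    have e2 : ((p+2).choose (m+1) : ℝ) = ((p:ℝ)+2) * ((p+1).choose m : ℝ) / ((m:ℝ)+1) := by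
      rw [eq_div_iff hm1]
      have := Nat.add_one_mul_choose_eq (p+1) m
      have h := congrArg (Nat.cast (R := ℝ)) this
      push_cast at h
      linarith [h]
    -- E1
    have e1 : ((p+1).choose (m+1) : ℝ)
        = ((p+1).choose m : ℝ) * (((p:ℝ)+1) - m) / ((m:ℝ)+1) := by
      rw [eq_div_iff hm1]
      have := Nat.choose_succ_right_eq (p+1) m
      have h := congrArg (Nat.cast (R := ℝ)) this
      push_cast [Nat.cast_sub (by omega : m ≤ p+1)] at h
      linarith [h]
    -- E3
    have e3 : (p.choose (m+1) : ℝ)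
        = ((p+1).choose m : ℝ) * (((p:ℝ)+1) - m) * ((p:ℝ) - m) / (((m:ℝ)+1)*((p:ℝ)+1)) := by
      rcases Nat.lt_or_ge p m with hpm | hpm
      · -- m = p+1
        have hmp : m = p + 1 := by omega
        subst hmp
        have h3 : p.choose (p+1+1) = 0 := Nat.choose_eq_zero_of_lt (by omega)
        rw [h3]
        push_cast
        field_simp
        ring
      · -- m ≤ p
        rw [eq_div_iff (by positivity)]
        have hA := Nat.choose_succ_right_eq p m
        have hB := Nat.add_one_mul_choose_eq p m
        have hC := Nat.choose_succ_right_eq (p+1) m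
        -- (p+1)*C(p,m) = C(p+1,m+1)*(m+1) = C(p+1,m)*(p+1-m) ... combine in ℕ:
        have key : p.choose (m+1) * (m+1) * (p+1) = (p+1).choose m * (p+1-m) * (p-m) := by
          calc p.choose (m+1) * (m+1) * (p+1) = (p.choose m * (p-m)) * (p+1) := by rw [hA]
          _ = ((p+1) * p.choose m) * (p-m) := by ring
          _ = ((p+1).choose (m+1) * (m+1)) * (p-m) := by rw [hB]
          _ = ((p+1).choose m * (p+1-m)) * (p-m) := by rw [hC]
          _ = (p+1).choose m * (p+1-m) * (p-m) := by ring
        have h := congrArg (Nat.cast (R := ℝ)) key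
        push_cast [Nat.cast_sub (by omega : m ≤ p+1), Nat.cast_sub (by omega : m ≤ p)] at h
        linarith [h]
    -- F1
    have f1 : ((a+p+m+2).choose (m+1) : ℝ)
        = ((a:ℝ)+p+m+2) * ((a+p+m+1).choose m : ℝ) / ((m:ℝ)+1) := by
      rw [eq_div_iff hm1]
      have := Nat.add_one_mul_choose_eq (a+p+m+1) m
      have h := congrArg (Nat.cast (R := ℝ)) this
      push_cast at h
      linarith [h]
    -- F3
    have f3 : ((a+p+m+1).choose (m+1) : ℝ)
        = ((a+p+m+1).choose m : ℝ) * ((a:ℝ)+p+1) / ((m:ℝ)+1) := by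
      rw [eq_div_iff hm1]
      have := Nat.choose_succ_right_eq (a+p+m+1) m
      rw [show a+p+m+1-m = a+p+1 by omega] at this
      have h := congrArg (Nat.cast (R := ℝ)) this
      push_cast at h
      linarith [h]
    -- F2
    have f2 : ((a+p+m+3).choose (m+1) : ℝ)
        = ((a:ℝ)+p+m+3)*((a:ℝ)+p+m+2) * ((a+p+m+1).choose m : ℝ)
            / (((m:ℝ)+1)*((a:ℝ)+p+2)) := by
      rw [eq_div_iff (by positivity)]
      have hB := Nat.add_one_mul_choose_eq (a+p+m+2) m
      have hC := Nat.choose_mul_succ_eq (a+p+m+1) m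
      rw [show a+p+m+1+1-m = a+p+2 by omega] at hC
      have key : (a+p+m+3).choose (m+1) * ((m+1) * (a+p+2))
          = (a+p+m+3) * ((a+p+m+1).choose m * (a+p+m+2)) := by
        calc (a+p+m+3).choose (m+1) * ((m+1) * (a+p+2))
            = ((a+p+m+3).choose (m+1) * (m+1)) * (a+p+2) := by ring
          _ = ((a+p+m+3) * (a+p+m+2).choose m) * (a+p+2) := by
              rw [← hB]
          _ = (a+p+m+3) * ((a+p+m+2).choose m * (a+p+2)) := by ring
          _ = (a+p+m+3) * ((a+p+m+1).choose m * (a+p+m+2)) := by rw [← hC]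
      have h := congrArg (Nat.cast (R := ℝ)) key
      push_cast at h
      linarith [h]
    rw [e1, e2, e3, f1, f2, f3]
    field_simp
    ring

lemma sum_rec (a p : ℕ) (u : ℝ) :
    2*((p:ℝ)+2)*((p:ℝ)+(a:ℝ)+2)*(2*(p:ℝ)+(a:ℝ)+2)
      * (∑ m ∈ Finset.range (p+3), ((p+2).choose m : ℝ)*((a+p+m+2).choose m : ℝ)*u^m)
    = (2*(p:ℝ)+(a:ℝ)+3)
        * (((2*(p:ℝ)+(a:ℝ)+2)*(2*(p:ℝ)+(a:ℝ)+4) - (a:ℝ)^2)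
            + (2*(p:ℝ)+(a:ℝ)+2)*(2*(p:ℝ)+(a:ℝ)+4)*(2*u))
        * (∑ m ∈ Finset.range (p+2), ((p+1).choose m : ℝ)*((a+p+m+1).choose m : ℝ)*u^m)
      - 2*((p:ℝ)+1)*((p:ℝ)+(a:ℝ)+1)*(2*(p:ℝ)+(a:ℝ)+4)
        * (∑ m ∈ Finset.range (p+1), (p.choose m : ℝ)*((a+p+m).choose m : ℝ)*u^m) := by
  have hpad2 : ∑ m ∈ Finset.range (p+2), ((p+1).choose m : ℝ)*((a+p+m+1).choose m : ℝ)*u^m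
      = ∑ m ∈ Finset.range (p+3), ((p+1).choose m : ℝ)*((a+p+m+1).choose m : ℝ)*u^m := by
    rw [Finset.sum_range_succ (n := p+2)]
    rw [Nat.choose_eq_zero_of_lt (by omega : p+1 < p+2)]
    push_cast; ring
  have hpad3 : ∑ m ∈ Finset.range (p+1), (p.choose m : ℝ)*((a+p+m).choose m : ℝ)*u^m
      = ∑ m ∈ Finset.range (p+3), (p.choose m : ℝ)*((a+p+m).choose m : ℝ)*u^m := by
    rw [Finset.sum_range_succ (n := p+2), Finset.sum_range_succ (n := p+1)]
    rw [Nat.choose_eq_zero_of_lt (by omega : p < p+1), Nat.choose_eq_zero_of_lt (by omega : p < p+2)]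
    push_cast; ring
  have H : ∑ m ∈ Finset.range (p+3),
        (2*((p:ℝ)+2)*((p:ℝ)+(a:ℝ)+2)*(2*(p:ℝ)+(a:ℝ)+2)
            * (((p+2).choose m : ℝ)*((a+p+m+2).choose m : ℝ)*u^m)
          - ((2*(p:ℝ)+(a:ℝ)+3)*((2*(p:ℝ)+(a:ℝ)+2)*(2*(p:ℝ)+(a:ℝ)+4) - (a:ℝ)^2)
              *  (((p+1).choose m : ℝ)*((a+p+m+1).choose m : ℝ)*u^m))
          + 2*((p:ℝ)+1)*((p:ℝ)+(a:ℝ)+1)*(2*(p:ℝ)+(a:ℝ)+4)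
            * ((p.choose m : ℝ)*((a+p+m).choose m : ℝ)*u^m))
      = ∑ m ∈ Finset.range (p+3),
          (2*(2*(p:ℝ)+(a:ℝ)+2)*(2*(p:ℝ)+(a:ℝ)+3)*(2*(p:ℝ)+(a:ℝ)+4))
            * (((p+1).choose m : ℝ)*((a+p+m+1).choose m : ℝ)*u^(m+1)) := by
    rw [Finset.sum_range_succ' _ (p+2), Finset.sum_range_succ _ (p+2)]
    have hlast : (2*(2*(p:ℝ)+(a:ℝ)+2)*(2*(p:ℝ)+(a:ℝ)+3)*(2*(p:ℝ)+(a:ℝ)+4))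
        * (((p+1).choose (p+2) : ℝ)*((a+p+(p+2)+1).choose (p+2) : ℝ)*u^((p+2)+1)) = 0 := by
      rw [Nat.choose_eq_zero_of_lt (by omega : p+1 < p+2)]
      push_cast; ring
    rw [hlast]
    have hzero : (2*((p:ℝ)+2)*((p:ℝ)+(a:ℝ)+2)*(2*(p:ℝ)+(a:ℝ)+2)
            * (((p+2).choose 0 : ℝ)*((a+p+0+2).choose 0 : ℝ)*u^0)
          - ((2*(p:ℝ)+(a:ℝ)+3)*((2*(p:ℝ)+(a:ℝ)+2)*(2*(p:ℝ)+(a:ℝ)+4) - (a:ℝ)^2)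
              *  (((p+1).choose 0 : ℝ)*((a+p+0+1).choose 0 : ℝ)*u^0))
          + 2*((p:ℝ)+1)*((p:ℝ)+(a:ℝ)+1)*(2*(p:ℝ)+(a:ℝ)+4)
            * ((p.choose 0 : ℝ)*((a+p+0).choose 0 : ℝ)*u^0)) = 0 := by
      simp only [Nat.choose_zero_right, Nat.cast_one, pow_zero]
      ring
    rw [hzero, add_zero, add_zero]
    refine Finset.sum_congr rfl fun m hm => ?_
    exact perterm a p m u
  have hsplit : ∑ m ∈ Finset.range (p+3),
        (2*((p:ℝ)+2)*((p:ℝ)+(a:ℝ)+2)*(2*(p:ℝ)+(a:ℝ)+2)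
            * (((p+2).choose m : ℝ)*((a+p+m+2).choose m : ℝ)*u^m)
          - ((2*(p:ℝ)+(a:ℝ)+3)*((2*(p:ℝ)+(a:ℝ)+2)*(2*(p:ℝ)+(a:ℝ)+4) - (a:ℝ)^2)
              *  (((p+1).choose m : ℝ)*((a+p+m+1).choose m : ℝ)*u^m))
          + 2*((p:ℝ)+1)*((p:ℝ)+(a:ℝ)+1)*(2*(p:ℝ)+(a:ℝ)+4)
            * ((p.choose m : ℝ)*((a+p+m).choose m : ℝ)*u^m))
      = 2*((p:ℝ)+2)*((p:ℝ)+(a:ℝ)+2)*(2*(p:ℝ)+(a:ℝ)+2)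
          * (∑ m ∈ Finset.range (p+3), ((p+2).choose m : ℝ)*((a+p+m+2).choose m : ℝ)*u^m)
        - (2*(p:ℝ)+(a:ℝ)+3)*((2*(p:ℝ)+(a:ℝ)+2)*(2*(p:ℝ)+(a:ℝ)+4) - (a:ℝ)^2)
          * (∑ m ∈ Finset.range (p+3), ((p+1).choose m : ℝ)*((a+p+m+1).choose m : ℝ)*u^m)
        + 2*((p:ℝ)+1)*((p:ℝ)+(a:ℝ)+1)*(2*(p:ℝ)+(a:ℝ)+4)
          * (∑ m ∈ Finset.range (p+3), (p.choose m : ℝ)*((a+p+m).choose m : ℝ)*u^m) := by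
    simp only [Finset.sum_add_distrib, Finset.sum_sub_distrib, ← Finset.mul_sum]
  have hshift : ∑ m ∈ Finset.range (p+3),
        (2*(2*(p:ℝ)+(a:ℝ)+2)*(2*(p:ℝ)+(a:ℝ)+3)*(2*(p:ℝ)+(a:ℝ)+4))
          * (((p+1).choose m : ℝ)*((a+p+m+1).choose m : ℝ)*u^(m+1))
      = (2*(2*(p:ℝ)+(a:ℝ)+2)*(2*(p:ℝ)+(a:ℝ)+3)*(2*(p:ℝ)+(a:ℝ)+4)) * u
          * (∑ m ∈ Finset.range (p+3), ((p+1).choose m : ℝ)*((a+p+m+1).choose m : ℝ)*u^m) := by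
    rw [Finset.mul_sum]
    exact Finset.sum_congr rfl fun m _ => by ring
  rw [hsplit, hshift] at H
  rw [hpad2, hpad3]
  linear_combination H


lemma zern_rep (q N n : ℕ) (x : ℝ) :
    zernikeR q N n x = x^N * ∑ m ∈ Finset.range (n+1),
      (n.choose m : ℝ) * (((N+q)+n+m).choose m : ℝ) * (x^2-1)^m := by
  rw [zernikeR]
  congr 1
  have h := rep' (N+q) n (x^2)
  rw [← h]
  refine Finset.sum_congr rfl fun k _ => ?_
  rw [show n + N + q = n + (N+q) by omega, pow_mul]

theorem zernike_radial_recurrence (q N n : ℕ) (hn : 1 ≤ n)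
    (x : ℝ) (hx : x ∈ Set.Icc (0:ℝ) 1) :
    2 * (n + 1) * (n + N + q + 1) * (2 * n + N + q) * zernikeR q N (n + 1) x
      = -(((2 * n + N + q + 1) * ((N : ℝ) + q) ^ 2
            + (2 * n + N + q) * (2 * n + N + q + 1) * (2 * n + N + q + 2)
              * (1 - 2 * x ^ 2)) * zernikeR q N n x)
        - 2 * n * (n + N + q) * (2 * n + N + q + 2) * zernikeR q N (n - 1) x := by
  obtain ⟨p, rfl⟩ : ∃ p, n = p + 1 := ⟨n - 1, by omega⟩
  have h1 : zernikeR q N (p+1+1) x = x^N * ∑ m ∈ Finset.range (p+3),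
      ((p+2).choose m : ℝ) * ((N+q+p+m+2).choose m : ℝ) * (x^2-1)^m := by
    rw [zern_rep]
    congr 1
    refine Finset.sum_congr rfl fun m _ => ?_
    rw [show (N+q)+(p+1+1)+m = N+q+p+m+2 by omega]
  have h2 : zernikeR q N (p+1) x = x^N * ∑ m ∈ Finset.range (p+2),
      ((p+1).choose m : ℝ) * ((N+q+p+m+1).choose m : ℝ) * (x^2-1)^m := by
    rw [zern_rep]
    congr 1
    refine Finset.sum_congr rfl fun m _ => ?_
    rw [show (N+q)+(p+1)+m = N+q+p+m+1 by omega]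
  have h3 : zernikeR q N (p+1-1) x = x^N * ∑ m ∈ Finset.range (p+1),
      (p.choose m : ℝ) * ((N+q+p+m).choose m : ℝ) * (x^2-1)^m := by
    rw [show p+1-1 = p from rfl, zern_rep]
  rw [h1, h2, h3]
  have K := sum_rec (N+q) p (x^2-1)
  push_cast at K ⊢
  linear_combination (x^N) * K
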